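/- Let G be a finite group with a central involution t, and let 𝔖 ⊆ G \ {1} be an inverse-closed union of conjugacy classes of G. For each irreducible complex character χ of G set θ_χ = (∑_{s∈𝔖} χ(s))/χ(1). Suppose (i) θ_χ ∈ ℤ for every irreducible character χ, and (ii) there exists a ∈ ℤ such that θ_χ ≡ a (mod 4) for every irreducible χ with χ(t) = χ(1), and θ_χ ≡ a+2 (mod 4) for every irreducible χ with χ(t) = −χ(1). Then for every x ∈ G there is a time τ ∈ ℝ at which perfect state transfer occurs in Cay(G,𝔖) from the vertex x to the vertex xt. -/

import Mathlib

open scoped Classical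

/-- Perfect state transfer from `a` to `b` at time `τ` for the continuous-time quantum
walk with Hamiltonian given by the complex matrix `A`. -/
noncomputable def pst {V : Type*} [Fintype V] [DecidableEq V]
    (A : Matrix V V ℂ) (a b : V) (τ : ℝ) : Prop :=
  ∃ γ : ℂ, ‖γ‖ = 1 ∧
    (NormedSpace.exp ((-(τ : ℂ) * Complex.I) • A)).mulVec (Pi.single a 1 : V → ℂ) =
      γ • (Pi.single b 1 : V → ℂ)

/-- The adjacency matrix of the Cayley graph `Cay(G, S)`. -/
noncomputable def cayleyAdj {G : Type*} [Group G] (S : Set G) : Matrix G G ℂ :=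
  fun g h => if h * g⁻¹ ∈ S then 1 else 0

set_option linter.unusedSectionVars false
set_option maxHeartbeats 1000000

section ExpEigen

attribute [local instance] Matrix.linftyOpNormedAddCommGroup Matrix.linftyOpNormedRing
  Matrix.linftyOpNormedAlgebra

lemma exp_mulVec_eigen {n : Type*} [Fintype n] [DecidableEq n] (M : Matrix n n ℂ)
    (v : n → ℂ) (c : ℂ) (h : M.mulVec v = c • v) :
    (NormedSpace.exp M).mulVec v = Complex.exp c • v := by
  have hpow : ∀ k : ℕ, (M ^ k).mulVec v = c ^ k • v := by
    intro k; induction k with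
    | zero => simp [Matrix.one_mulVec]
    | succ k ih =>
        rw [pow_succ, ← Matrix.mulVec_mulVec, h, Matrix.mulVec_smul, ih, pow_succ,
          smul_smul, mul_comm]
  let L : Matrix n n ℂ →ₗ[ℂ] (n → ℂ) :=
    { toFun := fun A => A.mulVec v
      map_add' := fun A B => Matrix.add_mulVec A B v
      map_smul' := fun r A => Matrix.smul_mulVec r A v }
  have hs : Summable (fun k : ℕ => ((Nat.factorial k : ℂ))⁻¹ • M ^ k) :=
    NormedSpace.expSeries_summable' M
  have hL : (NormedSpace.exp M).mulVec v
      = ∑' k : ℕ, (((Nat.factorial k : ℂ))⁻¹ • M ^ k).mulVec v := by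
    rw [NormedSpace.exp_eq_tsum ℂ]
    exact ((L.toContinuousLinearMap).map_tsum hs)
  rw [hL]
  have heach : ∀ k : ℕ, (((Nat.factorial k : ℂ))⁻¹ • M ^ k).mulVec v
      = (((Nat.factorial k : ℂ))⁻¹ * c ^ k) • v := by
    intro k
    rw [Matrix.smul_mulVec, hpow, smul_smul]
  simp_rw [heach]
  rw [Summable.tsum_smul_const]
  · congr 1
    have h2 := NormedSpace.exp_eq_tsum (𝕂 := ℂ) (𝔸 := ℂ)
    rw [← Complex.exp_eq_exp_ℂ] at h2
    rw [congrFun h2 c]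
    simp [smul_eq_mul]
  · have h3 := NormedSpace.expSeries_summable' (𝕂 := ℂ) (𝔸 := ℂ) c
    simpa [smul_eq_mul] using h3

end ExpEigen

lemma exp_scalar_eq (a m : ℤ) (ε : ℂ)
    (h : (ε = 1 ∧ m ≡ a [ZMOD 4]) ∨ (ε = -1 ∧ m ≡ a + 2 [ZMOD 4])) :
    Complex.exp (-(↑(Real.pi / 2) : ℂ) * Complex.I * (m : ℂ))
      = Complex.exp (((-(Real.pi / 2) * (a : ℝ) : ℝ) : ℂ) * Complex.I) * ε := by
  rcases h with ⟨hε, hm⟩ | ⟨hε, hm⟩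
  · obtain ⟨k, hk⟩ : (4 : ℤ) ∣ a - m := Int.ModEq.dvd hm
    have hmc : (m : ℂ) = (a : ℂ) - 4 * (k : ℂ) := by
      have : (m : ℤ) = a - 4 * k := by omega
      exact_mod_cast congrArg (fun z : ℤ => (z : ℂ)) this
    have harg : -(↑(Real.pi / 2) : ℂ) * Complex.I * (m : ℂ)
        = ((-(Real.pi / 2) * (a : ℝ) : ℝ) : ℂ) * Complex.I
          + (k : ℂ) * (2 * (Real.pi : ℂ) * Complex.I) := by
      rw [hmc]
      push_cast
      ring
    rw [harg, Complex.exp_add, Complex.exp_int_mul_two_pi_mul_I, mul_one, hε, mul_one]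
  · obtain ⟨k, hk⟩ : (4 : ℤ) ∣ a + 2 - m := Int.ModEq.dvd hm
    have hmc : (m : ℂ) = (a : ℂ) + 2 - 4 * (k : ℂ) := by
      have : (m : ℤ) = a + 2 - 4 * k := by omega
      exact_mod_cast congrArg (fun z : ℤ => (z : ℂ)) this
    have harg : -(↑(Real.pi / 2) : ℂ) * Complex.I * (m : ℂ)
        = (((-(Real.pi / 2) * (a : ℝ) : ℝ)) : ℂ) * Complex.I
          + ((k : ℂ) * (2 * (Real.pi : ℂ) * Complex.I) + -((Real.pi : ℂ) * Complex.I)) := by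
      rw [hmc]
      push_cast
      ring
    rw [harg, Complex.exp_add, Complex.exp_add, Complex.exp_int_mul_two_pi_mul_I, one_mul,
      Complex.exp_neg, Complex.exp_pi_mul_I, hε]
    norm_num

noncomputable section Aux

open CategoryTheory

variable {G : Type} [Group G] [Fintype G]

local notation "R" => MonoidAlgebra ℂ G

/-- Restriction of a representation to an invariant subspace. -/
def resRep (Y : FDRep ℂ G) (p : Submodule ℂ Y)
    (hp : ∀ g : G, ∀ v : Y, v ∈ p → Y.ρ g v ∈ p) : Representation ℂ G p where
  toFun g := (Y.ρ g).restrict (fun v hv => hp g v hv)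
  map_one' := by ext v; simp [LinearMap.restrict_apply]
  map_mul' g g' := by ext v; simp [LinearMap.restrict_apply]

lemma fdhom_comm {Y V : FDRep ℂ G} (f : Y ⟶ V) (g : G) (y : Y) :
    f.hom.hom.hom (Y.ρ g y) = V.ρ g (f.hom.hom.hom y) :=
  congrArg (fun φ => φ.hom.hom y) (f.comm g)

lemma fdRep_simple_of_invariant (V : FDRep ℂ G) (hnt : ∃ v : V, v ≠ 0)
    (hs : ∀ p : Submodule ℂ V, (∀ g : G, ∀ v : V, v ∈ p → V.ρ g v ∈ p) → p = ⊥ ∨ p = ⊤) :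
    Simple V := by
  constructor
  intro Y f hf
  constructor
  · intro hiso hf0
    obtain ⟨v, hv⟩ := hnt
    apply hv
    have h1 : inv f ≫ f = 𝟙 V := IsIso.inv_hom_id f
    have h2 := congrFun (congrArg (fun φ : V ⟶ V => DFunLike.coe φ.hom.hom.hom) h1) v
    have hfh : f.hom = 0 := by rw [hf0]; rfl
    simp only [Action.comp_hom, Action.id_hom] at h2
    have h3 : f.hom.hom.hom ((inv f).hom.hom.hom v) = v := h2
    rw [hfh] at h3
    exact h3.symm
  · intro hf0
    have hker : LinearMap.ker f.hom.hom.hom = ⊥ := by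
      set p : Submodule ℂ Y := LinearMap.ker f.hom.hom.hom with hp
      have hinv : ∀ g : G, ∀ v : Y, v ∈ p → Y.ρ g v ∈ p := by
        intro g v hv
        have hc := f.comm g
        have h4 : f.hom.hom.hom (Y.ρ g v) = V.ρ g (f.hom.hom.hom v) := fdhom_comm f g v
        simp only [hp, LinearMap.mem_ker] at hv ⊢
        exact h4.trans ((congrArg (⇑(V.ρ g)) hv).trans (map_zero _))
      let K : FDRep ℂ G := FDRep.of (resRep Y p hinv)
      let ι : K ⟶ Y := ⟨InducedCategory.homMk (ModuleCat.ofHom (p.subtype : p →ₗ[ℂ] Y)), fun g => rfl⟩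
      have hcomp : ι ≫ f = 0 := by
        apply Action.hom_ext
        ext x
        simp only [Action.comp_hom, Action.zero_hom, LinearMap.zero_apply]
        exact x.2
      have hι : ι = 0 := Limits.zero_of_comp_mono f hcomp
      rw [Submodule.eq_bot_iff]
      intro x hx
      have h5 := congrArg Action.Hom.hom hι
      have h6 := congrFun (congrArg (fun φ => DFunLike.coe φ.hom.hom) h5) ⟨x, hx⟩
      exact h6
    have hrange : LinearMap.range f.hom.hom.hom = ⊤ := by
      have hinv : ∀ g : G, ∀ v : V, v ∈ LinearMap.range f.hom.hom.hom →
          V.ρ g v ∈ LinearMap.range f.hom.hom.hom := by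
        rintro g v ⟨y, rfl⟩
        exact ⟨Y.ρ g y, fdhom_comm f g y⟩
      rcases hs _ hinv with h | h
      · exfalso
        apply hf0
        apply Action.hom_ext
        ext y
        have hy : f.hom.hom.hom y ∈ LinearMap.range f.hom.hom.hom := ⟨y, rfl⟩
        rw [h] at hy
        simpa using hy
      · exact h
    have hbij : Function.Bijective f.hom.hom.hom :=
      ⟨LinearMap.ker_eq_bot.mp hker, LinearMap.range_eq_top.mp hrange⟩
    let e : Y ≃ₗ[ℂ] V := LinearEquiv.ofBijective f.hom.hom.hom hbij
    have hcomm : ∀ g : G, ∀ v : V, Y.ρ g (e.symm v) = e.symm (V.ρ g v) := by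
      intro g v
      have h1 : f.hom.hom.hom (Y.ρ g (e.symm v)) = V.ρ g (f.hom.hom.hom (e.symm v)) :=
        fdhom_comm f g (e.symm v)
      have h2 : f.hom.hom.hom (e.symm v) = v := e.apply_symm_apply v
      rw [h2] at h1
      have h3 : e (Y.ρ g (e.symm v)) = V.ρ g v := h1
      have h4 := congrArg e.symm h3
      rwa [e.symm_apply_apply] at h4
    let ginv : V ⟶ Y := ⟨InducedCategory.homMk (ModuleCat.ofHom (e.symm.toLinearMap : V →ₗ[ℂ] Y)), by
      intro g
      ext v
      exact (hcomm g v).symm⟩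
    refine ⟨ginv, ?_, ?_⟩
    · apply Action.hom_ext
      ext y
      exact e.symm_apply_apply y
    · apply Action.hom_ext
      ext v
      exact e.apply_symm_apply v

/-- The ℂ-linear inclusion of a `MonoidAlgebra`-submodule into the algebra. -/
def WInc (W : Submodule R R) : W →ₗ[ℂ] R where
  toFun w := (w : R)
  map_add' _ _ := rfl
  map_smul' _ _ := rfl

instance (W : Submodule R R) : FiniteDimensional ℂ W := by
  haveI : FiniteDimensional ℂ R :=
    Module.Finite.equiv ((Finsupp.linearEquivFunOnFinite ℂ ℂ G).symm.trans (MonoidAlgebra.coeffLinearEquiv ℂ).symm)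
  exact FiniteDimensional.of_injective (WInc W) Subtype.coe_injective

/-- The representation of `G` on a left submodule of the group algebra. -/
def rhoW (W : Submodule R R) : Representation ℂ G W where
  toFun g :=
    { toFun := fun w => ⟨MonoidAlgebra.single g (1 : ℂ) * (w : R), by
        simpa [smul_eq_mul] using W.smul_mem (MonoidAlgebra.single g (1 : ℂ)) w.2⟩
      map_add' := fun u v => by ext; simp [mul_add]
      map_smul' := fun c u => by ext; simp [mul_smul_comm] }
  map_one' := by
    ext w
    simp [MonoidAlgebra.one_def]
  map_mul' g g' := by
    ext w
    simp [MonoidAlgebra.single_mul_single, mul_assoc]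

lemma rhoW_apply (W : Submodule R R) (g : G) (w : W) :
    ((rhoW W g w : W) : R) = MonoidAlgebra.single g (1 : ℂ) * (w : R) := rfl

lemma w_invariant (W : Submodule R R) (hW : IsSimpleModule R W)
    (p : Submodule ℂ W) (hp : ∀ g : G, ∀ w : W, w ∈ p → rhoW W g w ∈ p) :
    p = ⊥ ∨ p = ⊤ := by
  have key : ∀ r : R, ∀ w : W, w ∈ p → r • w ∈ p := by
    intro r
    refine MonoidAlgebra.induction_on (motive := fun r : R => ∀ w : W, w ∈ p → r • w ∈ p) r ?_ ?_ ?_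
    · intro g w hw
      have h1 : (MonoidAlgebra.of ℂ G g) • w = rhoW W g w := by
        apply Subtype.ext
        simp [rhoW_apply, MonoidAlgebra.of_apply, smul_eq_mul]
      rw [h1]
      exact hp g w hw
    · intro f g hf hg w hw
      rw [add_smul]
      exact p.add_mem (hf w hw) (hg w hw)
    · intro c f hf w hw
      rw [smul_assoc]
      exact p.smul_mem c (hf w hw)
  let q : Submodule R W :=
    { carrier := (p : Set W)
      add_mem' := fun ha hb => p.add_mem ha hb
      zero_mem' := p.zero_mem
      smul_mem' := fun r w hw => key r w hw }
  rcases eq_bot_or_eq_top q with h | h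
  · left
    rw [Submodule.eq_bot_iff]
    intro x hx
    have hx' : x ∈ q := hx
    rw [h] at hx'
    simpa using hx'
  · right
    rw [Submodule.eq_top_iff']
    intro x
    have hx' : x ∈ q := by rw [h]; trivial
    exact hx'

lemma schur_scalar (W : Submodule R R) (hW : IsSimpleModule R W)
    (f : Module.End ℂ W) (hf : ∀ g : G, ∀ w : W, f (rhoW W g w) = rhoW W g (f w)) :
    ∃ c : ℂ, ∀ w : W, f w = c • w := by
  haveI : Nontrivial W := IsSimpleModule.nontrivial R W
  obtain ⟨c, hc⟩ := Module.End.exists_eigenvalue f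
  refine ⟨c, ?_⟩
  have hinv : ∀ g : G, ∀ w : W, w ∈ f.eigenspace c → rhoW W g w ∈ f.eigenspace c := by
    intro g w hw
    rw [Module.End.mem_eigenspace_iff] at hw ⊢
    rw [hf g w, hw, map_smul]
  rcases w_invariant W hW _ hinv with h | h
  · exact absurd h hc
  · intro w
    have : w ∈ f.eigenspace c := by rw [h]; trivial
    rwa [Module.End.mem_eigenspace_iff] at this

section Master

variable (t : G) (S : Set G)

/-- The class sum of `S` in the group algebra. -/
def zS (S : Set G) : MonoidAlgebra ℂ G := ∑ s ∈ S.toFinset, MonoidAlgebra.single s (1 : ℂ)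

lemma zS_central (hSconj : ∀ s ∈ S, ∀ g : G, g * s * g⁻¹ ∈ S) :
    ∀ u : MonoidAlgebra ℂ G, zS S * u = u * zS S := by
  intro u
  refine MonoidAlgebra.induction_on (motive := fun u : R => zS S * u = u * zS S) u ?_ ?_ ?_
  · intro g
    simp only [MonoidAlgebra.of_apply, zS, Finset.sum_mul, Finset.mul_sum,
      MonoidAlgebra.single_mul_single, one_mul, mul_one]
    refine Finset.sum_nbij' (fun s => g⁻¹ * s * g) (fun s => g * s * g⁻¹) ?_ ?_ ?_ ?_ ?_
    · intro s hs
      simp only [Set.mem_toFinset] at hs ⊢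
      simpa using hSconj s hs g⁻¹
    · intro s hs
      simp only [Set.mem_toFinset] at hs ⊢
      exact hSconj s hs g
    · intro s _; group
    · intro s _; group
    · intro s _
      congr 1
      group
  · intro f h hf hh
    rw [mul_add, add_mul, hf, hh]
  · intro c f hf
    rw [mul_smul_comm, smul_mul_assoc, hf]

lemma single_t_central (htz : t ∈ Subgroup.center G) :
    ∀ u : MonoidAlgebra ℂ G, MonoidAlgebra.single t (1 : ℂ) * u
      = u * MonoidAlgebra.single t (1 : ℂ) := by
  intro u
  refine MonoidAlgebra.induction_on
    (motive := fun u : R => MonoidAlgebra.single t (1 : ℂ) * u = u * MonoidAlgebra.single t (1 : ℂ))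
    u ?_ ?_ ?_
  · intro g
    simp only [MonoidAlgebra.of_apply, MonoidAlgebra.single_mul_single, one_mul, mul_one]
    congr 1
    exact (Subgroup.mem_center_iff.mp htz g).symm
  · intro f h hf hh
    rw [mul_add, add_mul, hf, hh]
  · intro c f hf
    rw [mul_smul_comm, smul_mul_assoc, hf]

/-- Scalar action of a central element of the group algebra on a simple submodule. -/
lemma central_scalar (W : Submodule R R) (hW : IsSimpleModule R W)
    (z : MonoidAlgebra ℂ G) (hz : ∀ u : MonoidAlgebra ℂ G, z * u = u * z) :
    ∃ c : ℂ, ∀ w : W, z * (w : R) = c • (w : R) := by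
  let f : Module.End ℂ W :=
    { toFun := fun w => ⟨z * (w : R), by
        simpa [smul_eq_mul] using W.smul_mem z w.2⟩
      map_add' := fun u v => by ext; simp [mul_add]
      map_smul' := fun c u => by ext; simp [mul_smul_comm] }
  have hcomm : ∀ g : G, ∀ w : W, f (rhoW W g w) = rhoW W g (f w) := by
    intro g w
    apply Subtype.ext
    show z * (MonoidAlgebra.single g (1:ℂ) * (w : R))
      = MonoidAlgebra.single g (1:ℂ) * (z * (w : R))
    rw [← mul_assoc, hz (MonoidAlgebra.single g 1), mul_assoc]
  obtain ⟨c, hc⟩ := schur_scalar W hW f hcomm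
  refine ⟨c, fun w => ?_⟩
  have := congrArg (Subtype.val) (hc w)
  exact this

end Master

section Master2

open CategoryTheory

lemma summand_master (t : G) (htz : t ∈ Subgroup.center G) (ht2 : t ^ 2 = 1)
    (S : Set G) (hSconj : ∀ s ∈ S, ∀ g : G, g * s * g⁻¹ ∈ S)
    (hint : ∀ V : FDRep ℂ G, Simple V →
      ∃ m : ℤ, (∑ s ∈ S.toFinset, V.character s) = (m : ℂ) * V.character 1)
    (a : ℤ)
    (hmoda : ∀ V : FDRep ℂ G, Simple V → ∀ m : ℤ,
      (∑ s ∈ S.toFinset, V.character s) = (m : ℂ) * V.character 1 →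
        ((V.character t = V.character 1 → m ≡ a [ZMOD 4]) ∧
         (V.character t = -V.character 1 → m ≡ a + 2 [ZMOD 4])))
    (W : Submodule R R) (hW : IsSimpleModule R W) :
    ∃ (m : ℤ) (ε : ℂ),
      (∀ w : W, zS S * (w : R) = (m : ℂ) • (w : R)) ∧
      (∀ w : W, MonoidAlgebra.single t (1 : ℂ) * (w : R) = ε • (w : R)) ∧
      ((ε = 1 ∧ m ≡ a [ZMOD 4]) ∨ (ε = -1 ∧ m ≡ a + 2 [ZMOD 4])) := by
  haveI : Nontrivial W := IsSimpleModule.nontrivial R W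
  obtain ⟨cz, hcz⟩ := central_scalar W hW (zS S) (zS_central S hSconj)
  obtain ⟨ct, hct⟩ := central_scalar W hW (MonoidAlgebra.single t 1) (single_t_central t htz)
  obtain ⟨w0, hw0⟩ := exists_ne (0 : W)
  have hct2 : ct * ct = 1 := by
    have h1 : MonoidAlgebra.single t (1 : ℂ) * (MonoidAlgebra.single t (1 : ℂ) * (w0 : R))
        = (w0 : R) := by
      rw [← mul_assoc, MonoidAlgebra.single_mul_single, mul_one, ← pow_two, ht2,
        ← MonoidAlgebra.one_def, one_mul]
    rw [hct w0, mul_smul_comm, hct w0, smul_smul] at h1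
    have hw0' : (w0 : R) ≠ 0 := fun h => hw0 (Subtype.ext h)
    have h2 : (ct * ct - 1) • (w0 : R) = 0 := by
      rw [sub_smul, one_smul, h1, sub_self]
    rcases smul_eq_zero.mp h2 with h | h
    · exact sub_eq_zero.mp h
    · exact absurd h hw0'
  have hctpm : ct = 1 ∨ ct = -1 := mul_self_eq_one_iff.mp hct2
  let V : FDRep ℂ G := FDRep.of (rhoW W)
  have hVsimple : Simple V := by
    apply fdRep_simple_of_invariant
    · exact exists_ne (0 : W)
    · exact fun p hp => w_invariant W hW p hp
  set n : ℕ := Module.finrank ℂ W with hn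
  have hnpos : 0 < n := Module.finrank_pos
  have hnne : (n : ℂ) ≠ 0 := Nat.cast_ne_zero.mpr hnpos.ne'
  have hchar1 : V.character 1 = (n : ℂ) := by
    rw [FDRep.char_one]
  have hrhot : ∀ g : G, ∀ w : W, ((rhoW W g w : W) : R)
      = MonoidAlgebra.single g (1 : ℂ) * (w : R) := fun g w => rfl
  have hts : rhoW W t = ct • (LinearMap.id : W →ₗ[ℂ] W) := by
    refine LinearMap.ext fun w => Subtype.ext ?_
    show ((rhoW W t w : W) : R) = ((ct • w : W) : R)
    rw [hrhot, hct w]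
    rfl
  have hchart : V.character t = ct * (n : ℂ) := by
    show LinearMap.trace ℂ W ((rhoW W) t) = ct * (n : ℂ)
    rw [hts, map_smul, LinearMap.trace_id]
    simp [smul_eq_mul, hn]
  have hzsum : (∑ s ∈ S.toFinset, rhoW W s) = cz • (LinearMap.id : W →ₗ[ℂ] W) := by
    refine LinearMap.ext fun w => Subtype.ext ?_
    have h3 : (((∑ s ∈ S.toFinset, rhoW W s) w : W) : R)
        = ∑ s ∈ S.toFinset, ((rhoW W s w : W) : R) := by
      rw [LinearMap.sum_apply]
      exact Submodule.coe_sum _ _ _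
    rw [h3]
    have h4 : ∑ s ∈ S.toFinset, ((rhoW W s w : W) : R)
        = zS S * (w : R) := by
      rw [zS, Finset.sum_mul]
      exact Finset.sum_congr rfl fun s _ => hrhot s w
    rw [h4, hcz w]
    rfl
  have hcharsum : (∑ s ∈ S.toFinset, V.character s) = cz * (n : ℂ) := by
    have : (∑ s ∈ S.toFinset, V.character s)
        = LinearMap.trace ℂ W (∑ s ∈ S.toFinset, rhoW W s) := by
      rw [map_sum]
      rfl
    rw [this, hzsum, map_smul, LinearMap.trace_id]
    simp [smul_eq_mul, hn]
  obtain ⟨m, hm⟩ := hint V hVsimple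
  have hczm : cz = (m : ℂ) := by
    have := hcharsum.symm.trans hm
    rw [hchar1] at this
    exact mul_right_cancel₀ hnne this
  refine ⟨m, ct, fun w => by rw [hcz w, hczm], hct, ?_⟩
  have hbranch := hmoda V hVsimple m hm
  rcases hctpm with h | h
  · left
    refine ⟨h, hbranch.1 ?_⟩
    rw [hchart, hchar1, h, one_mul]
  · right
    refine ⟨h, hbranch.2 ?_⟩
    rw [hchart, hchar1, h]
    ring

end Master2

lemma cayleyAdj_mulVec (S : Set G) (hSinv : ∀ s ∈ S, s⁻¹ ∈ S) (u : MonoidAlgebra ℂ G) :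
    (cayleyAdj S).mulVec (⇑u.coeff) = ⇑(zS S * u).coeff := by
  funext g
  have hrhs : (zS S * u).coeff g = ∑ s ∈ S.toFinset, u.coeff (s⁻¹ * g) := by
    rw [zS, Finset.sum_mul]
    rw [MonoidAlgebra.coeff_sum, Finsupp.finset_sum_apply]
    refine Finset.sum_congr rfl fun s _ => ?_
    rw [MonoidAlgebra.coeff_single_mul_apply, one_mul]
  rw [hrhs]
  have hlhs : (cayleyAdj S).mulVec (⇑u.coeff) g
      = ∑ h ∈ Finset.univ.filter (fun h : G => h * g⁻¹ ∈ S), u.coeff h := by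
    rw [Matrix.mulVec, dotProduct]
    rw [Finset.sum_filter]
    refine Finset.sum_congr rfl fun h _ => ?_
    by_cases hh : h * g⁻¹ ∈ S <;> simp [cayleyAdj, hh]
  rw [hlhs]
  refine Finset.sum_nbij' (fun h => g * h⁻¹) (fun s => s⁻¹ * g) ?_ ?_ ?_ ?_ ?_
  · intro h hh
    simp only [Finset.mem_filter, Finset.mem_univ, true_and] at hh
    simp only [Set.mem_toFinset]
    have := hSinv _ hh
    simpa [mul_inv_rev] using this
  · intro s hs
    simp only [Set.mem_toFinset] at hs
    simp only [Finset.mem_filter, Finset.mem_univ, true_and]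
    have := hSinv _ hs
    simpa [mul_assoc] using this
  · intro h _; group
  · intro s _; group
  · intro h _
    congr 1
    group

end Aux

open CategoryTheory in
/-- PST criterion for graphs in the conjugacy class scheme of a finite group. -/
theorem stmt_5 (G : Type) [Group G] [Fintype G]
    (t : G) (ht1 : t ≠ 1) (ht2 : t ^ 2 = 1) (htz : t ∈ Subgroup.center G)
    (S : Set G) (hS1 : (1 : G) ∉ S) (hSinv : ∀ s ∈ S, s⁻¹ ∈ S)
    (hSconj : ∀ s ∈ S, ∀ g : G, g * s * g⁻¹ ∈ S)
    (hint : ∀ V : FDRep ℂ G, Simple V →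
      ∃ m : ℤ, (∑ s ∈ S.toFinset, V.character s) = (m : ℂ) * V.character 1)
    (hmod : ∃ a : ℤ, ∀ V : FDRep ℂ G, Simple V → ∀ m : ℤ,
      (∑ s ∈ S.toFinset, V.character s) = (m : ℂ) * V.character 1 →
        ((V.character t = V.character 1 → m ≡ a [ZMOD 4]) ∧
         (V.character t = -V.character 1 → m ≡ a + 2 [ZMOD 4]))) :
    ∀ x : G, ∃ τ : ℝ, pst (cayleyAdj S) x (x * t) τ := by
  obtain ⟨a, hmoda⟩ := hmod
  intro x
  refine ⟨Real.pi / 2, Complex.exp (((-(Real.pi / 2) * (a : ℝ) : ℝ) : ℂ) * Complex.I),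
    Complex.norm_exp_ofReal_mul_I _, ?_⟩
  set γ : ℂ := Complex.exp (((-(Real.pi / 2) * (a : ℝ) : ℝ) : ℂ) * Complex.I) with hγ
  haveI : NeZero ((Fintype.card G : ℂ)) := ⟨Nat.cast_ne_zero.mpr Fintype.card_ne_zero⟩
  set u0 : MonoidAlgebra ℂ G := MonoidAlgebra.single x (1 : ℂ) with hu0
  have hmem : u0 ∈ sSup {W : Submodule (MonoidAlgebra ℂ G) (MonoidAlgebra ℂ G) |
      IsSimpleModule (MonoidAlgebra ℂ G) W} := by
    rw [IsSemisimpleModule.sSup_simples_eq_top]; trivial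
  rw [sSup_eq_iSup', Submodule.mem_iSup_iff_exists_finsupp] at hmem
  obtain ⟨fdec, hfmem, hfsum⟩ := hmem
  choose m ε hmact htact hbranch using
    fun i : {W : Submodule (MonoidAlgebra ℂ G) (MonoidAlgebra ℂ G) //
        IsSimpleModule (MonoidAlgebra ℂ G) W} =>
      summand_master t htz ht2 S hSconj hint a hmoda i.1 i.2
  -- eigenvector computation for each piece
  set M : Matrix G G ℂ := (-(↑(Real.pi / 2) : ℂ) * Complex.I) • cayleyAdj S with hM
  have hpiece : ∀ i, (NormedSpace.exp M).mulVec (⇑(fdec i).coeff)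
      = γ • ⇑(MonoidAlgebra.single t (1 : ℂ) * fdec i).coeff := by
    intro i
    have hAv : (cayleyAdj S).mulVec (⇑(fdec i).coeff) = ((m i : ℂ)) • ⇑(fdec i).coeff := by
      rw [cayleyAdj_mulVec S hSinv]
      have := hmact i ⟨fdec i, hfmem i⟩
      simp only [Submodule.coe_mk] at this
      rw [this]
      exact Finsupp.coe_smul _ _
    have hMv : M.mulVec (⇑(fdec i).coeff) = ((-(↑(Real.pi / 2) : ℂ) * Complex.I) * (m i : ℂ)) • ⇑(fdec i).coeff := by
      rw [hM, Matrix.smul_mulVec, hAv, smul_smul]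
    rw [exp_mulVec_eigen M _ _ hMv]
    rw [exp_scalar_eq a (m i) (ε i) (hbranch i), ← hγ]
    have hεv : (ε i) • ⇑(fdec i).coeff = ⇑(MonoidAlgebra.single t (1 : ℂ) * fdec i).coeff := by
      have := htact i ⟨fdec i, hfmem i⟩
      simp only [Submodule.coe_mk] at this
      rw [this]
      exact (Finsupp.coe_smul _ _).symm
    rw [mul_smul, hεv]
  -- assemble
  have hps : (Pi.single x 1 : G → ℂ) = ⇑u0.coeff := by
    rw [hu0]
    exact (Finsupp.single_eq_pi_single _ _).symm
  have hsum0 : u0 = ∑ i ∈ fdec.support, fdec i := by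
    rw [← hfsum]; rfl
  rw [hps, hsum0]
  have hcoesum : (⇑(∑ i ∈ fdec.support, fdec i).coeff : G → ℂ) = ∑ i ∈ fdec.support, ⇑(fdec i).coeff := by
    rw [MonoidAlgebra.coeff_sum]
    exact Finsupp.coe_finset_sum _ _
  rw [hcoesum]
  have hlin : (NormedSpace.exp M).mulVec (∑ i ∈ fdec.support, ⇑(fdec i).coeff)
      = ∑ i ∈ fdec.support, (NormedSpace.exp M).mulVec (⇑(fdec i).coeff) := by
    exact map_sum ((NormedSpace.exp M).mulVecLin) (fun i => (⇑(fdec i).coeff : G → ℂ)) fdec.support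
  rw [hlin]
  have : ∑ i ∈ fdec.support, (NormedSpace.exp M).mulVec (⇑(fdec i).coeff)
      = γ • ⇑(MonoidAlgebra.single t (1 : ℂ) * ∑ i ∈ fdec.support, fdec i).coeff := by
    rw [Finset.mul_sum]
    rw [MonoidAlgebra.coeff_sum, Finsupp.coe_finset_sum, Finset.smul_sum]
    exact Finset.sum_congr rfl fun i _ => hpiece i
  rw [this, ← hsum0, hu0]
  have hxt : MonoidAlgebra.single t (1 : ℂ) * MonoidAlgebra.single x (1 : ℂ)
      = MonoidAlgebra.single (x * t) (1 : ℂ) := by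
    rw [MonoidAlgebra.single_mul_single, mul_one]
    congr 1
    exact (Subgroup.mem_center_iff.mp htz x).symm
  rw [hxt]
  congr 1
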